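/- Let S be a real 2n×2n symplectic matrix, written in n×n blocks as S = [[A, B],[C, D]], with B invertible and det(S − I) ≠ 0. Then the symmetric matrix W″ = D·B⁻¹ + B⁻¹·A − B⁻¹ − (Bᵀ)⁻¹ is invertible. -/

import Mathlib

open Matrix

/-- The standard symplectic matrix `J = [[0, I], [-I, 0]]` (in `n × n` blocks). -/
noncomputable def stdJ (n : ℕ) : Matrix (Fin n ⊕ Fin n) (Fin n ⊕ Fin n) ℝ :=
  Matrix.fromBlocks 0 1 (-1) 0

/-- A real `2n × 2n` matrix is symplectic if `Sᵀ J S = J`. -/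
def IsSymplectic {n : ℕ} (S : Matrix (Fin n ⊕ Fin n) (Fin n ⊕ Fin n) ℝ) : Prop :=
  Sᵀ * stdJ n * S = stdJ n

/-- The symplectic Cayley transform `M_S = (1/2) J (S + I) (S - I)⁻¹`. -/
noncomputable def cayley {n : ℕ} (S : Matrix (Fin n ⊕ Fin n) (Fin n ⊕ Fin n) ℝ) :
    Matrix (Fin n ⊕ Fin n) (Fin n ⊕ Fin n) ℝ :=
  ((1 : ℝ) / 2) • (stdJ n * (S + 1) * (S - 1)⁻¹)

theorem hessian_invertible {n : ℕ} (A B C D : Matrix (Fin n) (Fin n) ℝ)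
    (hS : IsSymplectic (Matrix.fromBlocks A B C D)) (hB : B.det ≠ 0)
    (h : (Matrix.fromBlocks A B C D - 1).det ≠ 0) :
    IsUnit (D * B⁻¹ + B⁻¹ * A - B⁻¹ - (Bᵀ)⁻¹) := by
  haveI : Invertible B := B.invertibleOfIsUnitDet (isUnit_iff_ne_zero.2 hB)
  have hBu : IsUnit B.det := isUnit_iff_ne_zero.2 hB
  have hBT : IsUnit Bᵀ.det := by rwa [Matrix.det_transpose]
  -- extract block relations from symplecticity
  unfold IsSymplectic stdJ at hS
  rw [Matrix.fromBlocks_transpose, Matrix.fromBlocks_multiply,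
    Matrix.fromBlocks_multiply] at hS
  simp only [Matrix.mul_zero, Matrix.mul_one, Matrix.mul_neg, zero_add, add_zero,
    mul_zero, mul_one, mul_neg, neg_mul] at hS
  rw [Matrix.fromBlocks_inj] at hS
  obtain ⟨h11, h12, h21, h22⟩ := hS
  -- D * B⁻¹ = (Bᵀ)⁻¹ * Dᵀ
  have h22' : Bᵀ * D = Dᵀ * B := by
    have := h22
    rw [neg_add_eq_zero] at this
    exact this.symm
  have hDB : D * B⁻¹ = (Bᵀ)⁻¹ * Dᵀ := by
    have : (Bᵀ)⁻¹ * (Bᵀ * D) * B⁻¹ = (Bᵀ)⁻¹ * (Dᵀ * B) * B⁻¹ := by rw [h22']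
    rwa [← Matrix.mul_assoc, Matrix.nonsing_inv_mul _ hBT, Matrix.one_mul,
      Matrix.mul_assoc ((Bᵀ)⁻¹) (Dᵀ * B), Matrix.mul_assoc Dᵀ,
      Matrix.mul_nonsing_inv _ hBu, Matrix.mul_one] at this
  -- C = (Bᵀ)⁻¹ * (Dᵀ * A) - (Bᵀ)⁻¹
  have h21' : Bᵀ * C = Dᵀ * A - 1 := by
    have := h21
    rw [neg_add_eq_iff_eq_add] at this
    rw [this]; abel
  have hC : C = (Bᵀ)⁻¹ * (Dᵀ * A) - (Bᵀ)⁻¹ := by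
    have : (Bᵀ)⁻¹ * (Bᵀ * C) = (Bᵀ)⁻¹ * (Dᵀ * A - 1) := by rw [h21']
    rwa [← Matrix.mul_assoc, Matrix.nonsing_inv_mul _ hBT, Matrix.one_mul,
      Matrix.mul_sub, Matrix.mul_one] at this
  -- the key identity
  have key : C - (D - 1) * B⁻¹ * (A - 1) = D * B⁻¹ + B⁻¹ * A - B⁻¹ - (Bᵀ)⁻¹ := by
    have e1 : (D - 1) * B⁻¹ * (A - 1) = D * B⁻¹ * A - D * B⁻¹ - B⁻¹ * A + B⁻¹ := by
      noncomm_ring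
    have e2 : D * B⁻¹ * A = (Bᵀ)⁻¹ * (Dᵀ * A) := by rw [hDB, Matrix.mul_assoc]
    rw [e1, hC, e2]; abel
  -- determinant computation
  set P : Matrix (Fin n ⊕ Fin n) (Fin n ⊕ Fin n) ℝ := Matrix.fromBlocks 0 1 1 0 with hP
  have hPP : P * P = 1 := by
    rw [hP, Matrix.fromBlocks_multiply, ← Matrix.fromBlocks_one]
    simp
  have hdetP : IsUnit P.det := by
    apply IsUnit.of_mul_eq_one (a := P.det) P.det
    rw [← Matrix.det_mul, hPP, Matrix.det_one]
  have hE : Matrix.fromBlocks A B C D - 1 = Matrix.fromBlocks (A - 1) B C (D - 1) := by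
    rw [← Matrix.fromBlocks_one]
    ext i j
    cases i <;> cases j <;> simp [Matrix.fromBlocks]
  have hEP : Matrix.fromBlocks (A - 1) B C (D - 1) * P =
      Matrix.fromBlocks B (A - 1) (D - 1) C := by
    rw [hP, Matrix.fromBlocks_multiply]
    simp
  have hdet2 : (Matrix.fromBlocks B (A - 1) (D - 1) C).det ≠ 0 := by
    rw [← hEP, Matrix.det_mul]
    exact mul_ne_zero (by rw [← hE]; exact h) hdetP.ne_zero
  rw [Matrix.det_fromBlocks₁₁, invOf_eq_nonsing_inv] at hdet2
  have hdet3 : (C - (D - 1) * B⁻¹ * (A - 1)).det ≠ 0 := by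
    intro h0
    exact hdet2 (by rw [h0, mul_zero])
  rw [key] at hdet3
  exact (Matrix.isUnit_iff_isUnit_det _).2 (isUnit_iff_ne_zero.2 hdet3)
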